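/- Consider first-passage percolation on the square lattice with weight distribution F. Assume that for all sufficiently large n the number of self-avoiding walks of length n on ℤ² starting at the origin is at most 2.7^n. Then almost surely, for all but finitely many n, every self-avoiding walk of length n starting at the origin has at least n/100 edges e with ω_e ≥ t_{1/3}. -/

import Mathlib

open MeasureTheory Filter
open scoped ENNReal

/-- Vertices of the square lattice. -/
abbrev V : Type := ℤ × ℤ

/-- Edges of the nearest-neighbour lattice on `ℤ²`, encoded as a vertex together with a
Boolean: `(v, true)` is the horizontal edge from `v` to `v + (1,0)`, and `(v, false)` is
the vertical edge from `v` to `v + (0,1)`. -/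
abbrev Edge : Type := V × Bool

/-- Two vertices of `ℤ²` are adjacent if they are at `ℓ¹`-distance one. -/
def AdjV (u v : V) : Prop := (u.1 - v.1).natAbs + (u.2 - v.2).natAbs = 1

/-- The edge between two adjacent vertices. -/
def stepEdge (u v : V) : Edge :=
  if v = (u.1 + 1, u.2) then (u, true)
  else if v = (u.1, u.2 + 1) then (u, false)
  else if u = (v.1 + 1, v.2) then (v, true)
  else (v, false)

/-- `γ` is a self-avoiding lattice path with `m` edges from `x` to `y`. -/
def IsPath (γ : ℕ → V) (m : ℕ) (x y : V) : Prop :=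
  γ 0 = x ∧ γ m = y ∧ (∀ k < m, AdjV (γ k) (γ (k + 1))) ∧ Set.InjOn γ (Set.Iic m)

/-- The total weight of the first `m` steps of the path `γ`. -/
noncomputable def pathWeight (w : Edge → ℝ) (γ : ℕ → V) (m : ℕ) : ℝ :=
  ∑ k ∈ Finset.range m, w (stepEdge (γ k) (γ (k + 1)))

/-- The first-passage time `T(x,y)`: the infimum of the total weight over all
self-avoiding lattice paths connecting `x` to `y`. -/
noncomputable def passageTime (w : Edge → ℝ) (x y : V) : ℝ :=
  sInf { s | ∃ m γ, IsPath γ m x y ∧ s = pathWeight w γ m }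

/-- The `q`-th quantile `t_q := inf {t ≥ 0 : F([0,t]) ≥ q}` of a distribution `F` on `[0,∞)`. -/
noncomputable def quantile (F : Measure ℝ) (q : ℝ) : ℝ :=
  sInf { t : ℝ | 0 ≤ t ∧ ENNReal.ofReal q ≤ F (Set.Icc 0 t) }

/-- `γ` is a self-avoiding walk of length `m` (i.e. with `m` edges) starting at the origin. -/
def IsSAW (γ : ℕ → V) (m : ℕ) : Prop :=
  γ 0 = (0, 0) ∧ (∀ k < m, AdjV (γ k) (γ (k + 1))) ∧ Set.InjOn γ (Set.Iic m)

/-- The number of self-avoiding walks of length `m` on `ℤ²` starting at the origin. -/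
noncomputable def sawCount (m : ℕ) : ℕ :=
  Set.ncard { f : Fin (m + 1) → V | ∃ γ : ℕ → V, IsSAW γ m ∧ f = fun k : Fin (m + 1) => γ k.val }

/-- The number of steps `k < m` of the path `γ` whose edge has weight at least `t`. -/
noncomputable def heavySteps (w : Edge → ℝ) (t : ℝ) (γ : ℕ → V) (m : ℕ) : ℕ :=
  ((Finset.range m).filter fun k => t ≤ w (stepEdge (γ k) (γ (k + 1)))).card

def ends (e : Edge) : V × V := (e.1, if e.2 then (e.1.1+1, e.1.2) else (e.1.1, e.1.2+1))

lemma adj_cases {u v : V} (h : AdjV u v) :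
    v = (u.1+1, u.2) ∨ v = (u.1-1, u.2) ∨ v = (u.1, u.2+1) ∨ v = (u.1, u.2-1) := by
  obtain ⟨u1,u2⟩ := u; obtain ⟨v1,v2⟩ := v
  simp only [AdjV] at h
  simp only [Prod.mk.injEq]
  omega

lemma ends_stepEdge {u v : V} (h : AdjV u v) :
    ends (stepEdge u v) = (u, v) ∨ ends (stepEdge u v) = (v, u) := by
  obtain ⟨u1,u2⟩ := u; obtain ⟨v1,v2⟩ := v
  simp only [AdjV] at h
  unfold stepEdge ends
  split_ifs with h1 h2 h3 <;> simp_all [Prod.ext_iff] <;> omega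

lemma edge_injOn {γ : ℕ → V} {n : ℕ} (h : IsSAW γ n) :
    Set.InjOn (fun k => stepEdge (γ k) (γ (k+1))) (Set.Iio n) := by
  intro k hk j hj he
  simp only [Set.mem_Iio] at hk hj
  have inj := h.2.2
  have mk : k ∈ Set.Iic n := Set.mem_Iic.2 (by omega)
  have mk1 : k+1 ∈ Set.Iic n := Set.mem_Iic.2 (by omega)
  have mj : j ∈ Set.Iic n := Set.mem_Iic.2 (by omega)
  have mj1 : j+1 ∈ Set.Iic n := Set.mem_Iic.2 (by omega)
  have hek := ends_stepEdge (h.2.1 k hk)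
  have hej := ends_stepEdge (h.2.1 j hj)
  simp only at he
  rw [he] at hek
  rcases hek with h1 | h1 <;> rcases hej with h2 | h2 <;> rw [h1] at h2 <;>
      injection h2 with ha hb
  · exact inj mk mj ha
  · have e1 := inj mk mj1 ha; have e2 := inj mk1 mj hb; omega
  · have e1 := inj mk1 mj ha; have e2 := inj mk mj1 hb; omega
  · have e1 := inj mk1 mj1 ha; omega

lemma saw_bound {γ : ℕ → V} {n : ℕ} (h : IsSAW γ n) :
    ∀ k ≤ n, (γ k).1.natAbs + (γ k).2.natAbs ≤ k := by
  intro k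
  induction k with
  | zero => intro _; simp [h.1]
  | succ k ih =>
    intro hk
    have h1 := ih (by omega)
    have h2 : ((γ k).1 - (γ (k+1)).1).natAbs + ((γ k).2 - (γ (k+1)).2).natAbs = 1 :=
      h.2.1 k (by omega)
    omega

lemma sawSet_finite (n : ℕ) :
    {f : Fin (n+1) → V | ∃ γ, IsSAW γ n ∧ f = fun k : Fin (n+1) => γ k.val}.Finite := by
  have hsub : {f : Fin (n+1) → V | ∃ γ, IsSAW γ n ∧ f = fun k : Fin (n+1) => γ k.val} ⊆
      Set.pi Set.univ (fun _ : Fin (n+1) =>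
        (Set.Icc (-(n:ℤ)) n ×ˢ Set.Icc (-(n:ℤ)) n : Set V)) := by
    rintro f ⟨γ, hγ, rfl⟩ k -
    have hb := saw_bound hγ k.val (by omega)
    dsimp only
    refine ⟨⟨?_, ?_⟩, ?_, ?_⟩ <;> omega
  exact (Set.Finite.pi fun _ => ((Set.finite_Icc _ _).prod (Set.finite_Icc _ _))).subset hsub

lemma quantile_third (F : Measure ℝ) (hF : F (Set.Iio 0) = 0) :
    F (Set.Iio (quantile F (1/3))) ≤ ENNReal.ofReal (1/3) := by
  set t := quantile F (1/3) with ht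
  rcases le_or_gt t 0 with h0 | h0
  · have : F (Set.Iio t) ≤ F (Set.Iio 0) := measure_mono (Set.Iio_subset_Iio h0)
    simp [hF] at this
    simp [this]
  · have hIio : Set.Iio t ⊆ Set.Iio 0 ∪ Set.Ico 0 t := by
      intro x hx
      rcases lt_or_ge x 0 with hx0 | hx0
      · exact Or.inl hx0
      · exact Or.inr ⟨hx0, hx⟩
    have hle : F (Set.Iio t) ≤ F (Set.Ico 0 t) := by
      calc F (Set.Iio t) ≤ F (Set.Iio 0) + F (Set.Ico 0 t) :=
            (measure_mono hIio).trans (measure_union_le _ _)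
        _ = F (Set.Ico 0 t) := by rw [hF, zero_add]
    refine hle.trans ?_
    -- Ico 0 t = ⋃ n, Icc 0 (t - t/(n+1))
    have hunion : Set.Ico 0 t = ⋃ n : ℕ, Set.Icc 0 (t - t/(n+1)) := by
      ext x
      simp only [Set.mem_Ico, Set.mem_iUnion, Set.mem_Icc]
      constructor
      · rintro ⟨hx0, hxt⟩
        obtain ⟨n, hn⟩ := exists_nat_gt (t / (t - x))
        refine ⟨n, hx0, ?_⟩
        have htx : 0 < t - x := by linarith
        have : t / (t - x) < (n : ℝ) + 1 := by
          have : (n:ℝ) ≤ n + 1 := by linarith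
          linarith
        have : t < ((n:ℝ)+1) * (t - x) := by
          rwa [div_lt_iff₀ htx] at *
        have hpos : (0:ℝ) < (n:ℝ) + 1 := by positivity
        have hlt : t/((n:ℝ)+1) < t - x := by
          rw [div_lt_iff₀ hpos]; nlinarith
        linarith
      · rintro ⟨n, hx0, hxt⟩
        have : 0 < t / (n+1) := by positivity
        exact ⟨hx0, by linarith⟩
    rw [hunion]
    have hmono : Monotone (fun n : ℕ => Set.Icc (0:ℝ) (t - t/(n+1))) := by
      intro a b hab
      apply Set.Icc_subset_Icc le_rfl
      have h1 : t / ((b:ℝ)+1) ≤ t / ((a:ℝ)+1) := by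
        apply div_le_div_of_nonneg_left h0.le (by positivity)
        exact_mod_cast by omega
      linarith
    rw [hmono.measure_iUnion]
    refine iSup_le fun n => ?_
    by_contra hc
    push_neg at hc
    have hmem : (t - t/(n+1)) ∈ { s : ℝ | 0 ≤ s ∧ ENNReal.ofReal (1/3) ≤ F (Set.Icc 0 s) } := by
      constructor
      · have h1 : t / ((n:ℝ)+1) ≤ t := by
          rw [div_le_iff₀ (by positivity)]
          nlinarith
        linarith
      · exact hc.le
    have : t ≤ t - t/(n+1) := csInf_le ⟨0, fun s hs => hs.1⟩ hmem
    have : 0 < t / (n+1) := by positivity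
    linarith

lemma indep_prod {Ω : Type} [MeasurableSpace Ω] (P : Measure Ω)
    (w : Edge → Ω → ℝ) (hmeas : ∀ e, Measurable (w e))
    (hindep : ProbabilityTheory.iIndepFun w P)
    (F : Measure ℝ) (hdist : ∀ e, Measure.map (w e) P = F)
    (t : ℝ) (T : Finset Edge) :
    P (⋂ e ∈ T, w e ⁻¹' Set.Iio t) = F (Set.Iio t) ^ T.card := by
  rw [ProbabilityTheory.iIndepFun_iff_measure_inter_preimage_eq_mul.1 hindep T
      (sets := fun _ => Set.Iio t) (fun _ _ => measurableSet_Iio)]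
  rw [Finset.prod_congr rfl (fun e _ => ?_), Finset.prod_const]
  rw [← Measure.map_apply (hmeas e) measurableSet_Iio, hdist e]

lemma choose_bound (n m : ℕ) (hm : m ≤ n) : Nat.choose n m * 99^m ≤ 100^n := by
  have hsum := add_pow (99:ℕ) 1 n
  norm_num at hsum
  calc Nat.choose n m * 99^m = 99^m * Nat.choose n m := by ring
    _ ≤ ∑ k ∈ Finset.range (n+1), 99^k * Nat.choose n k :=
        Finset.single_le_sum (f := fun k => 99^k * Nat.choose n k)
          (fun _ _ => Nat.zero_le _) (Finset.mem_range.2 (by omega))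
    _ = 100^n := hsum.symm

lemma nat_ineq (n : ℕ) : 2700^n * Nat.choose n (n - n/100) ≤ 970^n * 3^(n - n/100) := by
  set q := n/100 with hq
  set m := n - q with hm
  have hqn : q ≤ n := Nat.div_le_self n 100
  have h100 : 100 * q ≤ n := by
    have := Nat.div_mul_le_self n 100
    omega
  set r := n - 100*q with hr
  have hnr : n = 100*q + r := by omega
  have key : 297 * 270000^100 ≤ 288090^100 := by norm_num
  have step1 : 270000^n * 297^q ≤ 288090^n := by
    rw [hnr, pow_add, pow_add, pow_mul, pow_mul]
    calc (270000^100)^q * 270000^r * 297^q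
        = (270000^100 * 297)^q * 270000^r := by rw [mul_pow]; ring
      _ ≤ (288090^100)^q * 288090^r := by
          gcongr
          · omega
          · norm_num
  have hchoose := choose_bound n m (by omega)
  have step2 : (2700^n * Nat.choose n m) * (99^m * 297^q) ≤ (970^n * 3^m) * (99^m * 297^q) := by
    calc (2700^n * Nat.choose n m) * (99^m * 297^q)
        = 2700^n * (Nat.choose n m * 99^m) * 297^q := by ring
      _ ≤ 2700^n * 100^n * 297^q := by gcongr
      _ = 270000^n * 297^q := by norm_num [← mul_pow]
      _ ≤ 288090^n := step1
      _ = 970^n * 297^n := by norm_num [← mul_pow]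
      _ = (970^n * 3^m) * (99^m * 297^q) := by
          have hn' : n = m + q := by omega
          have h297 : (297:ℕ)^m = 3^m * 99^m := by norm_num [← mul_pow]
          rw [hn', pow_add (297:ℕ), h297]; ring
  exact Nat.le_of_mul_le_mul_right step2 (by positivity)

lemma real_bound (n : ℕ) :
    (2.7:ℝ)^n * (Nat.choose n (n - n/100)) * (1/3)^(n - n/100) ≤ (0.97:ℝ)^n := by
  set m := n - n/100 with hm
  have h : ((2700^n * Nat.choose n m : ℕ) : ℝ) ≤ ((970^n * 3^m : ℕ) : ℝ) := by
    exact_mod_cast nat_ineq n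
  push_cast at h
  have h3 : (0:ℝ) < 3^m := by positivity
  have key : (2700:ℝ)^n * Nat.choose n m * (1/3)^m ≤ 970^n := by
    rw [one_div, inv_pow, ← div_eq_mul_inv, div_le_iff₀ h3]
    nlinarith
  calc (2.7:ℝ)^n * Nat.choose n m * (1/3)^m
      = (2700^n * Nat.choose n m * (1/3)^m) / 1000^n := by
        rw [show (2.7:ℝ) = 2700/1000 by norm_num, div_pow]; ring
    _ ≤ 970^n / 1000^n := by gcongr
    _ = (0.97:ℝ)^n := by
        rw [← div_pow]; norm_num

lemma heavySteps_congr {w : Edge → ℝ} {t : ℝ} {γ γ' : ℕ → V} {n : ℕ}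
    (h : ∀ k ≤ n, γ k = γ' k) : heavySteps w t γ n = heavySteps w t γ' n := by
  unfold heavySteps
  congr 1
  apply Finset.filter_congr
  intro k hk
  simp only [Finset.mem_range] at hk
  rw [h k (by omega), h (k+1) (by omega)]

lemma isSAW_congr {γ γ' : ℕ → V} {n : ℕ} (h : ∀ k ≤ n, γ k = γ' k) (hs : IsSAW γ n) :
    IsSAW γ' n := by
  obtain ⟨h0, hadj, hinj⟩ := hs
  refine ⟨by rw [← h 0 (by omega)]; exact h0, fun k hk => ?_, fun a ha b hb hab => ?_⟩
  · rw [← h k (by omega), ← h (k+1) (by omega)]; exact hadj k hk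
  · simp only [Set.mem_Iic] at ha hb
    exact hinj (Set.mem_Iic.2 ha) (Set.mem_Iic.2 hb) (by rw [h a ha, h b hb]; exact hab)

noncomputable def extendF {n : ℕ} (f : Fin (n+1) → V) : ℕ → V :=
  fun k => f ⟨min k n, Nat.lt_succ_of_le (min_le_right k n)⟩

lemma extendF_eq {n : ℕ} {γ : ℕ → V} (k : ℕ) (hk : k ≤ n) :
    extendF (fun j : Fin (n+1) => γ j.val) k = γ k := by
  simp only [extendF]
  congr 1
  omega

lemma badPath_bound {Ω : Type} [MeasurableSpace Ω] (P : Measure Ω) [IsProbabilityMeasure P]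
    (F : Measure ℝ) [IsProbabilityMeasure F] (hF : F (Set.Iio 0) = 0)
    (w : Edge → Ω → ℝ) (hmeas : ∀ e, Measurable (w e))
    (hindep : ProbabilityTheory.iIndepFun w P)
    (hdist : ∀ e, Measure.map (w e) P = F)
    {γ : ℕ → V} {n : ℕ} (hγ : IsSAW γ n) :
    P {x | ¬((n:ℝ)/100 ≤ (heavySteps (fun e => w e x) (quantile F (1/3)) γ n : ℝ))}
      ≤ (Nat.choose n (n - n/100) : ℝ≥0∞) * ENNReal.ofReal ((1/3)^(n - n/100)) := by
  set t := quantile F (1/3) with htq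
  set m := n - n/100 with hm
  set e : ℕ → Edge := fun k => stepEdge (γ k) (γ (k+1)) with he
  have hsub : {x | ¬((n:ℝ)/100 ≤ (heavySteps (fun e => w e x) t γ n : ℝ))} ⊆
      ⋃ S ∈ Finset.powersetCard m (Finset.range n), ⋂ k ∈ S, (w (e k) ⁻¹' Set.Iio t) := by
    intro x hx
    simp only [Set.mem_setOf_eq, not_le] at hx
    have h100 : 100 * heavySteps (fun e => w e x) t γ n < n := by
      have : ((100:ℝ)) * (heavySteps (fun e => w e x) t γ n : ℝ) < n := by
        rw [lt_div_iff₀ (by norm_num : (0:ℝ) < 100)] at hx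
        linarith
      exact_mod_cast this
    have hsplit := Finset.card_filter_add_card_filter_not
      (s := Finset.range n) (p := fun k => t ≤ w (e k) x)
    rw [Finset.card_range] at hsplit
    have hheavy : heavySteps (fun e => w e x) t γ n =
        ((Finset.range n).filter (fun k => t ≤ w (e k) x)).card := rfl
    have hL : m ≤ ((Finset.range n).filter (fun k => ¬ t ≤ w (e k) x)).card := by omega
    obtain ⟨S, hS, hScard⟩ := Finset.exists_subset_card_eq hL
    simp only [Set.mem_iUnion, Set.mem_iInter]
    refine ⟨S, Finset.mem_powersetCard.2 ⟨hS.trans (Finset.filter_subset _ _), hScard⟩,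
      fun k hk => ?_⟩
    have := (Finset.mem_filter.1 (hS hk)).2
    exact Set.mem_preimage.2 (lt_of_not_ge this)
  calc P {x | ¬((n:ℝ)/100 ≤ (heavySteps (fun e => w e x) t γ n : ℝ))}
      ≤ ∑ S ∈ Finset.powersetCard m (Finset.range n), P (⋂ k ∈ S, w (e k) ⁻¹' Set.Iio t) :=
        (measure_mono hsub).trans (measure_biUnion_finset_le _ _)
    _ ≤ ∑ _S ∈ Finset.powersetCard m (Finset.range n), ENNReal.ofReal ((1/3)^m) := by
        refine Finset.sum_le_sum fun S hS => ?_
        obtain ⟨hSsub, hScard⟩ := Finset.mem_powersetCard.1 hS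
        have hinj : Set.InjOn e ↑S := (edge_injOn hγ).mono
          (fun k hk => Set.mem_Iio.2 (Finset.mem_range.1 (hSsub hk)))
        have himg : (⋂ k ∈ S, w (e k) ⁻¹' Set.Iio t) =
            ⋂ ed ∈ S.image e, w ed ⁻¹' Set.Iio t := by
          ext x
          simp only [Set.mem_iInter, Finset.mem_image]
          constructor
          · rintro hx ed ⟨k, hk, rfl⟩; exact hx k hk
          · intro hx k hk; exact hx (e k) ⟨k, hk, rfl⟩
        rw [himg, indep_prod P w hmeas hindep F hdist t,
          Finset.card_image_of_injOn hinj, hScard]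
        calc F (Set.Iio t) ^ m ≤ (ENNReal.ofReal (1/3))^m :=
              pow_le_pow_left₀ (zero_le) (quantile_third F hF) m
          _ = ENNReal.ofReal ((1/3)^m) := by rw [ENNReal.ofReal_pow (by norm_num)]
    _ = (Nat.choose n m : ℝ≥0∞) * ENNReal.ofReal ((1/3)^m) := by
        rw [Finset.sum_const, Finset.card_powersetCard, Finset.card_range, nsmul_eq_mul]

lemma bad_bound {Ω : Type} [MeasurableSpace Ω] (P : Measure Ω) [IsProbabilityMeasure P]
    (F : Measure ℝ) [IsProbabilityMeasure F] (hF : F (Set.Iio 0) = 0)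
    (w : Edge → Ω → ℝ) (hmeas : ∀ e, Measurable (w e))
    (hindep : ProbabilityTheory.iIndepFun w P)
    (hdist : ∀ e, Measure.map (w e) P = F) (n : ℕ) :
    P {x | ∃ γ : ℕ → V, IsSAW γ n ∧
        ¬((n:ℝ)/100 ≤ (heavySteps (fun e => w e x) (quantile F (1/3)) γ n : ℝ))}
      ≤ (sawCount n : ℝ≥0∞) *
        ((Nat.choose n (n - n/100) : ℝ≥0∞) * ENNReal.ofReal ((1/3)^(n - n/100))) := by
  set t := quantile F (1/3) with htq
  have hfin := sawSet_finite n
  have hsub : {x | ∃ γ : ℕ → V, IsSAW γ n ∧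
        ¬((n:ℝ)/100 ≤ (heavySteps (fun e => w e x) t γ n : ℝ))} ⊆
      ⋃ f ∈ hfin.toFinset,
        {x | ¬((n:ℝ)/100 ≤ (heavySteps (fun e => w e x) t (extendF f) n : ℝ))} := by
    rintro x ⟨γ, hγ, hbad⟩
    apply Set.mem_biUnion (x := fun k : Fin (n+1) => γ k.val)
    · exact hfin.mem_toFinset.2 ⟨γ, hγ, rfl⟩
    · have : heavySteps (fun e => w e x) t (extendF (fun k : Fin (n+1) => γ k.val)) n
          = heavySteps (fun e => w e x) t γ n :=
        heavySteps_congr (fun k hk => extendF_eq k hk)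
      simpa [this] using hbad
  calc P {x | ∃ γ : ℕ → V, IsSAW γ n ∧
        ¬((n:ℝ)/100 ≤ (heavySteps (fun e => w e x) t γ n : ℝ))}
      ≤ ∑ f ∈ hfin.toFinset,
          P {x | ¬((n:ℝ)/100 ≤ (heavySteps (fun e => w e x) t (extendF f) n : ℝ))} :=
        (measure_mono hsub).trans (measure_biUnion_finset_le _ _)
    _ ≤ ∑ _f ∈ hfin.toFinset,
          ((Nat.choose n (n - n/100) : ℝ≥0∞) * ENNReal.ofReal ((1/3)^(n - n/100))) := by
        refine Finset.sum_le_sum fun f hf => ?_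
        obtain ⟨γ, hγ, rfl⟩ := hfin.mem_toFinset.1 hf
        exact badPath_bound P F hF w hmeas hindep hdist
          (isSAW_congr (fun k hk => (extendF_eq k hk).symm) hγ)
    _ = (sawCount n : ℝ≥0∞) *
        ((Nat.choose n (n - n/100) : ℝ≥0∞) * ENNReal.ofReal ((1/3)^(n - n/100))) := by
        rw [Finset.sum_const, nsmul_eq_mul]
        congr 1
        rw [sawCount, Set.ncard_eq_toFinset_card _ hfin]

def BadSet {Ω : Type} (w : Edge → Ω → ℝ) (F : Measure ℝ) (n : ℕ) : Set Ω :=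
  {x | ∃ γ : ℕ → V, IsSAW γ n ∧
      ¬((n:ℝ)/100 ≤ (heavySteps (fun e => w e x) (quantile F (1/3)) γ n : ℝ))}

set_option maxHeartbeats 1000000 in
/-- Borel–Cantelli consequence: almost surely, for all but finitely many `n`, every
self-avoiding walk of length `n` starting at the origin has at least `n/100` edges of
weight at least `t_{1/3}`. -/
theorem eventually_saw_heavySteps
    {Ω : Type} [MeasurableSpace Ω] (P : Measure Ω) [IsProbabilityMeasure P]
    (F : Measure ℝ) [IsProbabilityMeasure F] (hF : F (Set.Iio 0) = 0)
    (w : Edge → Ω → ℝ) (hmeas : ∀ e, Measurable (w e)) (hnonneg : ∀ e x, 0 ≤ w e x)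
    (hindep : ProbabilityTheory.iIndepFun w P)
    (hdist : ∀ e, Measure.map (w e) P = F)
    (hcount : ∀ᶠ n in atTop, (sawCount n : ℝ) ≤ 2.7 ^ n) :
    ∀ᵐ x ∂P, ∀ᶠ n in atTop, ∀ γ : ℕ → V, IsSAW γ n →
      (n : ℝ) / 100 ≤ (heavySteps (fun e => w e x) (quantile F (1 / 3)) γ n : ℝ) := by
  have hev : ∀ᶠ n in atTop, P (BadSet w F n) ≤ ENNReal.ofReal 0.97 ^ n := by
    filter_upwards [hcount] with n hc
    calc P (BadSet w F n) ≤ (sawCount n : ℝ≥0∞) *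
          ((Nat.choose n (n - n/100) : ℝ≥0∞) * ENNReal.ofReal ((1/3)^(n - n/100))) :=
        bad_bound P F hF w hmeas hindep hdist n
      _ = ENNReal.ofReal ((sawCount n : ℝ) *
          ((Nat.choose n (n - n/100) : ℝ) * (1/3)^(n - n/100))) := by
          rw [ENNReal.ofReal_mul (Nat.cast_nonneg _), ENNReal.ofReal_mul (Nat.cast_nonneg _),
            ENNReal.ofReal_natCast, ENNReal.ofReal_natCast]
      _ ≤ ENNReal.ofReal ((0.97:ℝ)^n) := by
          apply ENNReal.ofReal_le_ofReal
          have hrb := real_bound n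
          calc (sawCount n : ℝ) * ((Nat.choose n (n - n/100) : ℝ) * (1/3)^(n - n/100))
              ≤ (2.7:ℝ)^n * ((Nat.choose n (n - n/100) : ℝ) * (1/3)^(n - n/100)) := by
                apply mul_le_mul_of_nonneg_right hc (by positivity)
            _ ≤ (0.97:ℝ)^n := by rw [← mul_assoc]; exact hrb
      _ = ENNReal.ofReal 0.97 ^ n := ENNReal.ofReal_pow (p := 0.97) (by norm_num) n
  obtain ⟨N, hN⟩ := eventually_atTop.1 hev
  have hr : ENNReal.ofReal 0.97 < 1 := by
    have h1 : ENNReal.ofReal 0.97 < ENNReal.ofReal 1 :=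
      (ENNReal.ofReal_lt_ofReal_iff (by norm_num)).2 (by norm_num)
    simpa using h1
  have hsum : ∑' n, P (BadSet w F n) ≠ ∞ := by
    set r := ENNReal.ofReal 0.97 with hrdef
    have hle : ∀ n, P (BadSet w F n) ≤ (if n < N then 1 else 0) + r ^ n := by
      intro n
      by_cases hn : n < N
      · simp only [hn, if_true]
        exact le_add_right prob_le_one
      · simp only [hn, if_false, zero_add]
        exact hN n (by omega)
    have h1 : ∑' n, P (BadSet w F n) ≤ ∑' n, ((if n < N then 1 else 0) + r ^ n) :=
      ENNReal.tsum_le_tsum hle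
    rw [ENNReal.tsum_add] at h1
    have h2 : ∑' n, (if n < N then (1:ℝ≥0∞) else 0)
        = ∑ n ∈ Finset.range N, (if n < N then (1:ℝ≥0∞) else 0) := by
      apply tsum_eq_sum
      intro b hb
      simp only [Finset.mem_range] at hb
      simp [hb]
    apply ne_of_lt
    refine h1.trans_lt ?_
    rw [h2, ENNReal.tsum_geometric]
    apply ENNReal.add_lt_top.2
    constructor
    · calc ∑ n ∈ Finset.range N, (if n < N then (1:ℝ≥0∞) else 0)
          ≤ ∑ _n ∈ Finset.range N, (1:ℝ≥0∞) :=
            Finset.sum_le_sum (fun i _ => by split <;> simp)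
        _ = N := by simp
        _ < ⊤ := ENNReal.natCast_lt_top N
    · exact ENNReal.inv_lt_top.2 (tsub_pos_of_lt hr)
  filter_upwards [MeasureTheory.ae_eventually_notMem hsum] with x hx
  filter_upwards [hx] with n hn
  intro γ hγ
  by_contra hcon
  exact hn ⟨γ, hγ, hcon⟩
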